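/- Let r ≥ 1 and let k₁,…,k_r be positive integers with max{k₁,…,k_r} = k_j ≥ 4r+2 attained at index j. If the region 𝒯(k₁,…,k_r) is nonempty, then k_i = 1 for every index i with |i − j| = 1 and k_i = 2 for every index i with |i − j| ≥ 2. -/

import Mathlib

open MeasureTheory

/-- The BCZ transform T(x,y) = (y, ⌊(1+x)/y⌋·y − x). -/
noncomputable def bcz (p : ℝ × ℝ) : ℝ × ℝ :=
  (p.2, (⌊(1 + p.1) / p.2⌋ : ℝ) * p.2 - p.1)

/-- The Farey triangle 𝒯 = {(x,y) : 0 < x ≤ 1, 0 < y ≤ 1, x + y > 1}. -/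
def fareyTriangle : Set (ℝ × ℝ) :=
  {p | 0 < p.1 ∧ p.1 ≤ 1 ∧ 0 < p.2 ∧ p.2 ≤ 1 ∧ 1 < p.1 + p.2}

/-- The region 𝒯(k) = {(x,y) ∈ 𝒯 : ⌊(1+x)/y⌋ = k}. -/
def TT (k : ℕ) : Set (ℝ × ℝ) :=
  {p | p ∈ fareyTriangle ∧ ⌊(1 + p.1) / p.2⌋ = (k : ℤ)}

/-- The region 𝒯(k₁,…,k_r) = 𝒯(k₁) ∩ T⁻¹(𝒯(k₂)) ∩ ⋯ ∩ T^{−(r−1)}(𝒯(k_r)). -/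
noncomputable def TTlist (ks : List ℕ) : Set (ℝ × ℝ) :=
  ⋂ i : Fin ks.length, (bcz^[i.1]) ⁻¹' TT (ks.get i)

/-- If the maximal entry k_j of (k₁,…,k_r) satisfies k_j ≥ 4r+2 and 𝒯(k₁,…,k_r) is nonempty,
then k_i = 1 whenever |i − j| = 1 and k_i = 2 whenever |i − j| ≥ 2. -/
theorem tuple_of_large_entry (r : ℕ) (hr : 1 ≤ r) (ks : List ℕ) (hlen : ks.length = r)
    (hpos : ∀ k ∈ ks, 0 < k) (j : Fin ks.length)
    (hmax : ∀ i : Fin ks.length, ks.get i ≤ ks.get j)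
    (hbig : 4 * r + 2 ≤ ks.get j)
    (hne : (TTlist ks).Nonempty) :
    ∀ i : Fin ks.length,
      ((((i : ℕ) : ℤ) - ((j : ℕ) : ℤ)).natAbs = 1 → ks.get i = 1) ∧
      (2 ≤ (((i : ℕ) : ℤ) - ((j : ℕ) : ℤ)).natAbs → ks.get i = 2) := by
  obtain ⟨p, hp⟩ := hne
  set X : ℕ → ℝ := fun n => (bcz^[n] p).1 with hXdef
  set Y : ℕ → ℝ := fun n => (bcz^[n] p).2 with hYdef
  set K : ℕ → ℕ := fun n => ks.getD n 0 with hKdef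
  have hXs : ∀ n, X (n + 1) = Y n := by
    intro n
    simp only [hXdef, hYdef, Function.iterate_succ_apply', bcz]
  have hYs0 : ∀ n, Y (n + 1) = (⌊(1 + X n) / Y n⌋ : ℝ) * Y n - X n := by
    intro n
    simp only [hXdef, hYdef, Function.iterate_succ_apply', bcz]
  have hgetK : ∀ i : Fin ks.length, ks.get i = K i.1 := by
    intro i
    simp [hKdef, List.getD_eq_getElem?_getD, List.getElem?_eq_getElem i.2, List.get_eq_getElem]
  have hmem : ∀ n, n < r →
      (0 < X n ∧ X n ≤ 1 ∧ 0 < Y n ∧ Y n ≤ 1 ∧ 1 < X n + Y n) ∧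
        ⌊(1 + X n) / Y n⌋ = (K n : ℤ) := by
    intro n hn
    have hn' : n < ks.length := by omega
    have h := Set.mem_iInter.mp hp ⟨n, hn'⟩
    have h2 : bcz^[n] p ∈ TT (ks.get ⟨n, hn'⟩) := h
    simp only [TT, fareyTriangle, Set.mem_setOf_eq] at h2
    obtain ⟨h3, h4⟩ := h2
    rw [hgetK ⟨n, hn'⟩] at h4
    exact ⟨h3, h4⟩
  have hKpos : ∀ n, n < r → 1 ≤ K n := by
    intro n hn
    have hn' : n < ks.length := by omega
    have h1 : ks.get ⟨n, hn'⟩ ∈ ks := ks.get_mem ⟨n, hn'⟩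
    have h2 := hpos _ h1
    rw [hgetK ⟨n, hn'⟩] at h2
    exact h2
  clear_value X Y K
  clear hp hXdef hYdef hKdef
  have hYs : ∀ n, n < r → Y (n + 1) = (K n : ℝ) * Y n - X n := by
    intro n hn
    rw [hYs0 n, (hmem n hn).2]
    push_cast
    ring
  have hfloor_eq : ∀ (x y : ℝ), 0 < y → ∀ k : ℤ,
      ⌊(1 + x) / y⌋ = k ↔ ((k : ℝ) * y ≤ 1 + x ∧ 1 + x < ((k : ℝ) + 1) * y) := by
    intro x y hy k
    rw [Int.floor_eq_iff, le_div_iff₀ hy, div_lt_iff₀ hy]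
  set j0 := (j : ℕ) with hj0def
  have hj0r : j0 < r := by have := j.2; omega
  set ε : ℝ := Y j0 with hεdef
  obtain ⟨⟨hXj0, hXj1, hεpos, hε1, hsum⟩, hflrj⟩ := hmem j0 hj0r
  rw [← hεdef] at hεpos hε1 hsum hflrj
  have hKj : 4 * r + 2 ≤ K j0 := by rw [hgetK j] at hbig; exact hbig
  have hKjle : (K j0 : ℝ) * ε ≤ 1 + X j0 := by
    have h := Int.floor_le ((1 + X j0) / ε)
    rw [hflrj] at h
    push_cast at h
    rw [le_div_iff₀ hεpos] at h
    exact h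
  clear_value j0 ε
  have hεr : (2 * (r : ℝ) + 1) * ε ≤ 1 := by
    have h1 : ((4 * r + 2 : ℕ) : ℝ) ≤ (K j0 : ℝ) := by exact_mod_cast hKj
    push_cast at h1
    linarith [mul_le_mul_of_nonneg_right h1 hεpos.le]
  have hXjlb : 1 - ε < X j0 := by linarith
  have hrR : (1 : ℝ) ≤ (r : ℝ) := by exact_mod_cast hr
  -- helper: if Y t = X t - ε and X t is large, then K t = 2
  have hK2 : ∀ t, t < r → Y t = X t - ε → 1 + 3 * ε < 2 * X t → K t = 2 := by
    intro t ht h1 h2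
    obtain ⟨⟨hx0, hx1, hy0, hy1, hxy⟩, hfl⟩ := hmem t ht
    have h3 : (K t : ℤ) = 2 := by
      rw [← hfl, hfloor_eq _ _ hy0 2]
      constructor
      · push_cast; linarith
      · push_cast; linarith
    exact_mod_cast h3
  -- the immediate predecessor has k = 1
  have hjm1 : 1 ≤ j0 → K (j0 - 1) = 1 ∧ X (j0 - 1) = Y (j0 - 1) - ε ∧ 1 - ε < Y (j0 - 1) := by
    intro hj1
    have hr2 : 2 ≤ r := by omega
    have h5R : (5 : ℝ) ≤ 2 * (r : ℝ) + 1 := by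
      have h : (2 : ℝ) ≤ (r : ℝ) := by exact_mod_cast hr2
      linarith
    have hε5 : 5 * ε ≤ 1 := by
      linarith [mul_le_mul_of_nonneg_right h5R hεpos.le]
    have ht1 : (j0 - 1) + 1 = j0 := by omega
    have htr : j0 - 1 < r := by omega
    obtain ⟨⟨hx0, hx1, hy0, hy1, hxy⟩, hfl⟩ := hmem (j0 - 1) htr
    have hYt : Y (j0 - 1) = X j0 := by
      have h := hXs (j0 - 1)
      rw [ht1] at h
      exact h.symm
    have hXteq : ε = (K (j0 - 1) : ℝ) * Y (j0 - 1) - X (j0 - 1) := by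
      rw [hεdef]
      conv_lhs => rw [← ht1]
      exact hYs (j0 - 1) htr
    have hKt1 : K (j0 - 1) = 1 := by
      by_contra hne1
      have h2 : 2 ≤ K (j0 - 1) := by have := hKpos (j0 - 1) htr; omega
      have h2R : (2 : ℝ) ≤ (K (j0 - 1) : ℝ) := by exact_mod_cast h2
      have hprod : 2 * Y (j0 - 1) ≤ (K (j0 - 1) : ℝ) * Y (j0 - 1) :=
        mul_le_mul_of_nonneg_right h2R hy0.le
      rw [hYt] at hprod
      rw [hYt] at hXteq
      linarith
    rw [hKt1] at hXteq
    push_cast at hXteq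
    exact ⟨hKt1, by linarith [hYt], by rw [hYt]; linarith⟩
  -- backward induction
  have hback : ∀ d, 1 ≤ d → d ≤ j0 →
      X (j0 - d) = Y (j0 - d) - ε ∧ 1 - (d : ℝ) * ε < Y (j0 - d) ∧ (2 ≤ d → K (j0 - d) = 2) := by
    intro d hd
    induction d, hd using Nat.le_induction with
    | base =>
      intro h1j
      obtain ⟨hk, hx, hy⟩ := hjm1 h1j
      exact ⟨hx, by push_cast; linarith, by omega⟩
    | succ d hd IH =>
      intro hd1
      obtain ⟨hXY, hYlb, _⟩ := IH (by omega)
      have hs1 : (j0 - (d + 1)) + 1 = j0 - d := by omega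
      have hsr : j0 - (d + 1) < r := by omega
      have hdR : (d : ℝ) ≤ (r : ℝ) - 2 := by
        have h : (d : ℝ) + 1 ≤ (r : ℝ) - 1 := by exact_mod_cast (by omega : d + 1 ≤ r - 1)
        linarith
      have hdε : (2 * (d : ℝ) + 5) * ε ≤ 1 := by
        have h1 : 2 * (d : ℝ) + 5 ≤ 2 * (r : ℝ) + 1 := by linarith
        linarith [mul_le_mul_of_nonneg_right h1 hεpos.le]
      obtain ⟨⟨hx0, hx1, hy0, hy1, hxy⟩, hfl⟩ := hmem (j0 - (d + 1)) hsr
      have hYsX : Y (j0 - (d + 1)) = X (j0 - (d + 1) + 1) := (hXs (j0 - (d + 1))).symm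
      have hXb : 1 - ((d : ℝ) + 1) * ε < X (j0 - (d + 1) + 1) := by
        rw [hs1]
        linarith [hXY, hYlb]
      have hXseq : X (j0 - (d + 1)) =
          (K (j0 - (d + 1)) : ℝ) * X (j0 - (d + 1) + 1) - (X (j0 - (d + 1) + 1) + ε) := by
        have h1 := hYs (j0 - (d + 1)) hsr
        have h2 : Y (j0 - (d + 1) + 1) = X (j0 - (d + 1) + 1) + ε := by
          rw [hs1]; linarith [hXY]
        rw [hYsX] at h1
        linarith
      have hXsp : (0 : ℝ) < X (j0 - (d + 1) + 1) := by linarith [hXb, hdε, hεpos]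
      have hKs1 : 1 ≤ K (j0 - (d + 1)) := hKpos _ hsr
      have hKne1 : K (j0 - (d + 1)) ≠ 1 := by
        intro h
        rw [h] at hXseq
        push_cast at hXseq
        linarith
      have hKlt3 : K (j0 - (d + 1)) < 3 := by
        by_contra h3
        have h3R : (3 : ℝ) ≤ (K (j0 - (d + 1)) : ℝ) := by
          exact_mod_cast (by omega : 3 ≤ K (j0 - (d + 1)))
        have hprod : 3 * X (j0 - (d + 1) + 1) ≤ (K (j0 - (d + 1)) : ℝ) * X (j0 - (d + 1) + 1) :=
          mul_le_mul_of_nonneg_right h3R hXsp.le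
        linarith [hprod, hXseq, hXb, hdε, hεpos, hx1]
      have hKs2 : K (j0 - (d + 1)) = 2 := by omega
      rw [hKs2] at hXseq
      push_cast at hXseq
      refine ⟨by rw [hYsX]; linarith, ?_, fun _ => hKs2⟩
      rw [hYsX]
      push_cast
      linarith
  -- the immediate successor has k = 1
  have hjp1 : j0 + 1 < r → K (j0 + 1) = 1 ∧ X (j0 + 1) = ε ∧ 1 - ε < Y (j0 + 1) := by
    intro hj1
    have hr2 : 2 ≤ r := by omega
    have h5R : (5 : ℝ) ≤ 2 * (r : ℝ) + 1 := by
      have h : (2 : ℝ) ≤ (r : ℝ) := by exact_mod_cast hr2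
      linarith
    have hε5 : 5 * ε ≤ 1 := by
      linarith [mul_le_mul_of_nonneg_right h5R hεpos.le]
    obtain ⟨⟨hx0, hx1, hy0, hy1, hxy⟩, hfl⟩ := hmem (j0 + 1) hj1
    have hX1 : X (j0 + 1) = ε := by rw [hεdef]; exact hXs j0
    have hYlb : 1 - ε < Y (j0 + 1) := by rw [hX1] at hxy; linarith
    refine ⟨?_, hX1, hYlb⟩
    have h1 : (K (j0 + 1) : ℤ) = 1 := by
      rw [← hfl, hfloor_eq _ _ hy0 1]
      rw [hX1]
      constructor
      · push_cast; linarith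
      · push_cast; linarith
    exact_mod_cast h1
  -- forward induction
  have hfwd : ∀ d, 2 ≤ d → j0 + d < r →
      Y (j0 + d) = X (j0 + d) - ε ∧ 1 - ((d : ℝ) - 1) * ε < X (j0 + d) ∧ K (j0 + d) = 2 := by
    intro d hd
    induction d, hd using Nat.le_induction with
    | base =>
      intro h2r
      have h1r : j0 + 1 < r := by omega
      obtain ⟨hk1, hX1, hY1⟩ := hjp1 h1r
      have hr2 : 2 ≤ r := by omega
      have h5R : (5 : ℝ) ≤ 2 * (r : ℝ) + 1 := by
        have h : (2 : ℝ) ≤ (r : ℝ) := by exact_mod_cast hr2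
        linarith
      have hε5 : 5 * ε ≤ 1 := by
        linarith [mul_le_mul_of_nonneg_right h5R hεpos.le]
      have hX2 : X (j0 + 2) = Y (j0 + 1) := by
        have h := hXs (j0 + 1)
        rwa [show j0 + 1 + 1 = j0 + 2 by omega] at h
      have hY2 : Y (j0 + 2) = X (j0 + 2) - ε := by
        have h := hYs (j0 + 1) h1r
        rw [hk1, hX1] at h
        push_cast at h
        rw [show j0 + 1 + 1 = j0 + 2 by omega] at h
        rw [h, hX2]
        ring
      have hX2lb : 1 - ((2 : ℝ) - 1) * ε < X (j0 + 2) := by rw [hX2]; linarith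
      refine ⟨hY2, hX2lb, hK2 (j0 + 2) h2r hY2 ?_⟩
      rw [hX2]
      linarith
    | succ d hd IH =>
      intro hd1
      obtain ⟨hYX, hXlb, hKt2⟩ := IH (by omega)
      have htr : j0 + d < r := by omega
      have hdR : (d : ℝ) ≤ (r : ℝ) - 2 := by
        have h : (d : ℝ) + 1 ≤ (r : ℝ) - 1 := by exact_mod_cast (by omega : d + 1 ≤ r - 1)
        linarith
      have hdε : (2 * (d : ℝ) + 3) * ε ≤ 1 := by
        have h1 : 2 * (d : ℝ) + 3 ≤ 2 * (r : ℝ) + 1 := by linarith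
        linarith [mul_le_mul_of_nonneg_right h1 hεpos.le]
      have hX1 : X (j0 + d + 1) = Y (j0 + d) := hXs (j0 + d)
      have hX1lb : 1 - (d : ℝ) * ε < X (j0 + d + 1) := by
        rw [hX1, hYX]
        push_cast
        linarith
      have hY1 : Y (j0 + d + 1) = X (j0 + d + 1) - ε := by
        have h := hYs (j0 + d) htr
        rw [hKt2] at h
        push_cast at h
        rw [hX1, hYX]
        linarith
      have ht1 : j0 + (d + 1) = j0 + d + 1 := by omega
      rw [ht1]
      refine ⟨hY1, by push_cast; linarith, hK2 (j0 + d + 1) (by omega) hY1 ?_⟩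
      linarith
  -- conclusion
  intro i
  have hir : (i : ℕ) < r := by have := i.2; omega
  constructor
  · intro habs
    have hcase : (i : ℕ) = j0 + 1 ∨ (i : ℕ) + 1 = j0 := by omega
    rcases hcase with h | h
    · rw [hgetK i, h]
      exact (hjp1 (by omega)).1
    · rw [hgetK i, show (i : ℕ) = j0 - 1 by omega]
      exact (hjm1 (by omega)).1
  · intro habs
    have hcase : (i : ℕ) + 2 ≤ j0 ∨ j0 + 2 ≤ (i : ℕ) := by omega
    rcases hcase with h | h
    · rw [hgetK i, show (i : ℕ) = j0 - (j0 - (i : ℕ)) by omega]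
      exact (hback (j0 - (i : ℕ)) (by omega) (by omega)).2.2 (by omega)
    · rw [hgetK i, show (i : ℕ) = j0 + ((i : ℕ) - j0) by omega]
      exact (hfwd ((i : ℕ) - j0) (by omega) (by omega)).2.2
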